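/- For each n ≥ 1, let X_n be a random element of ℝ^p on a probability space and C_n a map from ℝ^p to Borel subsets of ℝ with (x, y) ↦ 1{y ∈ C_n(x)} jointly measurable. If there exists α ∈ [0,1) such that liminf_{n→∞} P(y ∈ C_n(X_n)) ≥ 1 − α for every y ∈ ℝ, then lim_{n→∞} E[length(C_n(X_n))] = ∞. -/
import Mathlib


/-!
STATEMENT 13: If a sequence of set-valued maps asymptotically covers every fixed real number
with probability at least `1 − α` (in the liminf sense) for some `α < 1`, then the expected
Lebesgue lengths diverge to infinity.
-/

open MeasureTheory Filter

noncomputable section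

/-- For each `n`, let `X_n` be a random element of `ℝ^p` on a probability
space `(Ω_n, P_n)` and `C_n` a set-valued map with jointly measurable indicator. If there is
`α ∈ [0,1)` such that `liminf_{n→∞} P(y ∈ C_n(X_n)) ≥ 1 − α` for every `y ∈ ℝ`, then
`lim_{n→∞} E[length(C_n(X_n))] = ∞`. -/
theorem expected_length_tendsto_top_of_asymptotic_coverage
    {p : ℕ} (Ω : ℕ → Type*) [∀ n, MeasurableSpace (Ω n)]
    (P : (n : ℕ) → Measure (Ω n)) [∀ n, IsProbabilityMeasure (P n)]
    (X : (n : ℕ) → Ω n → Fin p → ℝ) (hX : ∀ n, Measurable (X n))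
    (C : ℕ → (Fin p → ℝ) → Set ℝ)
    (hC : ∀ n, MeasurableSet {q : (Fin p → ℝ) × ℝ | q.2 ∈ C n q.1})
    (α : ℝ) (hα : α ∈ Set.Ico (0 : ℝ) 1)
    (hcov : ∀ y : ℝ, ENNReal.ofReal (1 - α) ≤
      liminf (fun n => P n {ω | y ∈ C n (X n ω)}) atTop) :
    Tendsto (fun n => ∫⁻ ω, volume (C n (X n ω)) ∂(P n)) atTop (nhds ⊤) := by
  -- measurability of the joint indicator
  have hmeas : ∀ n, Measurable (fun q : Ω n × ℝ =>
      Set.indicator {q : (Fin p → ℝ) × ℝ | q.2 ∈ C n q.1} (fun _ => (1 : ENNReal))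
        (X n q.1, q.2)) := by
    intro n
    exact (measurable_const.indicator (hC n)).comp
      (((hX n).comp measurable_fst).prodMk measurable_snd)
  -- slices are measurable
  have hslice : ∀ n (ω : Ω n), MeasurableSet (C n (X n ω)) := by
    intro n ω
    exact measurable_prodMk_left (hC n)
  have hslice' : ∀ n (y : ℝ), MeasurableSet {ω : Ω n | y ∈ C n (X n ω)} := by
    intro n y
    have : {ω : Ω n | y ∈ C n (X n ω)} =
        (fun ω => (X n ω, y)) ⁻¹' {q : (Fin p → ℝ) × ℝ | q.2 ∈ C n q.1} := rfl
    rw [this]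
    exact ((hX n).prodMk measurable_const) (hC n)
  -- Tonelli: rewrite the expected length
  have key : ∀ n, ∫⁻ ω, volume (C n (X n ω)) ∂(P n)
      = ∫⁻ y, P n {ω | y ∈ C n (X n ω)} ∂(volume : Measure ℝ) := by
    intro n
    calc ∫⁻ ω, volume (C n (X n ω)) ∂(P n)
        = ∫⁻ ω, ∫⁻ y, Set.indicator {q : (Fin p → ℝ) × ℝ | q.2 ∈ C n q.1}
            (fun _ => (1 : ENNReal)) (X n ω, y) ∂(volume : Measure ℝ) ∂(P n) := by
          refine lintegral_congr fun ω => ?_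
          have : ∀ y : ℝ, Set.indicator {q : (Fin p → ℝ) × ℝ | q.2 ∈ C n q.1}
              (fun _ => (1 : ENNReal)) (X n ω, y)
              = Set.indicator (C n (X n ω)) (fun _ => (1 : ENNReal)) y := by
            intro y
            by_cases h : y ∈ C n (X n ω) <;>
              simp [Set.indicator_apply, h]
          simp_rw [this]
          exact (lintegral_indicator_one (hslice n ω)).symm
      _ = ∫⁻ y, ∫⁻ ω, Set.indicator {q : (Fin p → ℝ) × ℝ | q.2 ∈ C n q.1}
            (fun _ => (1 : ENNReal)) (X n ω, y) ∂(P n) ∂(volume : Measure ℝ) :=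
          lintegral_lintegral_swap (hmeas n).aemeasurable
      _ = ∫⁻ y, P n {ω | y ∈ C n (X n ω)} ∂(volume : Measure ℝ) := by
          refine lintegral_congr fun y => ?_
          have : ∀ ω : Ω n, Set.indicator {q : (Fin p → ℝ) × ℝ | q.2 ∈ C n q.1}
              (fun _ => (1 : ENNReal)) (X n ω, y)
              = Set.indicator {ω : Ω n | y ∈ C n (X n ω)} (fun _ => (1 : ENNReal)) ω := by
            intro ω
            by_cases h : y ∈ C n (X n ω) <;>
              simp [Set.indicator_apply, h]
          simp_rw [this]
          exact lintegral_indicator_one (hslice' n y)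
  -- measurability of y ↦ P n {ω | y ∈ C n (X n ω)}
  have hPmeas : ∀ n, Measurable (fun y : ℝ => P n {ω | y ∈ C n (X n ω)}) := by
    intro n
    have hT : MeasurableSet {q : Ω n × ℝ | q.2 ∈ C n (X n q.1)} := by
      have : {q : Ω n × ℝ | q.2 ∈ C n (X n q.1)} =
          (fun q : Ω n × ℝ => (X n q.1, q.2)) ⁻¹' {q : (Fin p → ℝ) × ℝ | q.2 ∈ C n q.1} := rfl
      rw [this]
      exact (((hX n).comp measurable_fst).prodMk measurable_snd) (hC n)
    exact measurable_measure_prodMk_right hT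
  -- Fatou + the coverage hypothesis give liminf = ⊤
  have hFatou : (∫⁻ y, liminf (fun n => P n {ω | y ∈ C n (X n ω)}) atTop
      ∂(volume : Measure ℝ)) ≤ liminf (fun n => ∫⁻ ω, volume (C n (X n ω)) ∂(P n)) atTop := by
    simp_rw [key]
    exact lintegral_liminf_le hPmeas
  have hbot : (∫⁻ y, liminf (fun n => P n {ω | y ∈ C n (X n ω)}) atTop
      ∂(volume : Measure ℝ)) = ⊤ := by
    refine eq_top_iff.mpr ?_
    calc (⊤ : ENNReal) = ∫⁻ _ : ℝ, ENNReal.ofReal (1 - α) ∂(volume : Measure ℝ) := by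
          rw [lintegral_const]
          have h1 : ENNReal.ofReal (1 - α) ≠ 0 := by
            simp [ENNReal.ofReal_eq_zero, not_le]
            linarith [hα.2]
          simp [Measure.restrict_univ, ENNReal.mul_eq_top, h1]
      _ ≤ _ := lintegral_mono fun y => hcov y
  have hliminf : liminf (fun n => ∫⁻ ω, volume (C n (X n ω)) ∂(P n)) atTop = ⊤ :=
    eq_top_iff.mpr (hbot ▸ hFatou)
  have hlimsup : limsup (fun n => ∫⁻ ω, volume (C n (X n ω)) ∂(P n)) atTop = ⊤ :=
    eq_top_iff.mpr (hliminf ▸ liminf_le_limsup)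
  have := tendsto_of_liminf_eq_limsup hliminf hlimsup
  exact this

end
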